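/- Let n ≥ 1 be an integer and ε ≥ 0, K̂₀ ≥ 0, 0 ≤ δ < 1 reals. Let Ψ and G₀ ≤ G₁ ≤ ⋯ ≤ G_k be nonnegative real matrices of the same size with G_h ≤ Ψ for all 0 ≤ h ≤ k and Ψ − G_h ≤ K̂₀ δ^{2ʰ} Ψ for all 0 ≤ h ≤ k−1, and set J_h = G_h − G_{h−1} for 1 ≤ h ≤ k. Let G̃₀ and J̃₁, …, J̃_k be real matrices of the same size with |G̃₀ − G₀| ≤ εG₀ and |J̃_h − J_h| ≤ n·2ʰ·ε·J_h for each 1 ≤ h ≤ k, and put G̃_k = G̃₀ + Σ_{h=1}^{k} J̃_h. Then |G̃_k − G_k| ≤ (1 + 4K̂₀n/(1−δ))·ε·Ψ entrywise. -/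

import Mathlib

lemma geomA (x : ℝ) (hx0 : 0 ≤ x) (hx1 : x < 1) (k : ℕ) :
    ∑ h ∈ Finset.Icc 1 (k+1), (2:ℝ)^h * x^(2^(h-1)) ≤ 4 * ∑ m ∈ Finset.Icc 1 (2^k), x^m := by
  induction k with
  | zero => simp [Finset.Icc_self]; nlinarith
  | succ k ih =>
      rw [Finset.sum_Icc_succ_top (by omega)]
      have hsplit : (∑ m ∈ Finset.Icc 1 (2^k), x^m) + ∑ m ∈ Finset.Ioc (2^k) (2^(k+1)), x^m
          = ∑ m ∈ Finset.Icc 1 (2^(k+1)), x^m := by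
        rw [show Finset.Icc 1 (2^k) = Finset.Ioc 0 (2^k) from (Finset.Icc_add_one_left_eq_Ioc 0 _),
            show Finset.Icc 1 (2^(k+1)) = Finset.Ioc 0 (2^(k+1)) from (Finset.Icc_add_one_left_eq_Ioc 0 _)]
        exact Finset.sum_Ioc_consecutive _ (Nat.zero_le _) (Nat.pow_le_pow_right (by norm_num) (by omega))
      have hcard : (2:ℝ)^(k+2) * x^(2^(k+1)) ≤ 4 * ∑ m ∈ Finset.Ioc (2^k) (2^(k+1)), x^m := by
        have h1 : ∀ m ∈ Finset.Ioc (2^k) (2^(k+1)), x^(2^(k+1)) ≤ x^m := by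
          intro m hm
          rw [Finset.mem_Ioc] at hm
          exact pow_le_pow_of_le_one hx0 hx1.le hm.2
        have h2 : (Finset.Ioc (2^k) (2^(k+1))).card = 2^k := by
          rw [Nat.card_Ioc, pow_succ]; omega
        have h3 : ∑ m ∈ Finset.Ioc (2^k) (2^(k+1)), x^(2^(k+1)) ≤ ∑ m ∈ Finset.Ioc (2^k) (2^(k+1)), x^m :=
          Finset.sum_le_sum h1
        rw [Finset.sum_const, h2, nsmul_eq_mul] at h3
        push_cast at h3 ⊢
        have h4 : (2:ℝ)^(k+2) = 4 * 2^k := by ring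
        rw [h4]
        linarith
      have hexp : (k + 1 + 1 : ℕ) - 1 = k + 1 := by omega
      rw [hexp]
      rw [← hsplit]
      have := ih
      push_cast at hcard ⊢
      linarith

lemma geomB (x : ℝ) (hx0 : 0 ≤ x) (hx1 : x < 1) (N : ℕ) :
    ∑ m ∈ Finset.Icc 1 N, x^m ≤ 1 / (1 - x) := by
  have h1 : (0:ℝ) < 1 - x := by linarith
  have hsub : Finset.Icc 1 N ⊆ Finset.range (N+1) := by
    intro m hm; rw [Finset.mem_Icc] at hm; rw [Finset.mem_range]; omega
  have h2 : ∑ m ∈ Finset.Icc 1 N, x^m ≤ ∑ m ∈ Finset.range (N+1), x^m :=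
    Finset.sum_le_sum_of_subset_of_nonneg hsub (fun m _ _ => pow_nonneg hx0 m)
  have h3 : ∑ m ∈ Finset.range (N+1), x^m = (1 - x^(N+1)) / (1 - x) := by
    rw [geom_sum_eq (by linarith : x ≠ 1)]
    rw [div_eq_div_iff (by linarith) (by linarith)]
    ring
  rw [h3] at h2
  have h4 : (1 - x^(N+1)) / (1 - x) ≤ 1 / (1 - x) := by
    gcongr ?_ / _ <;> nlinarith [pow_nonneg hx0 (N+1)]
  linarith


/-- Given nonnegative matrices G₀ ≤ G₁ ≤ ⋯ ≤ G_k ≤ Ψ with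
Ψ − G_h ≤ K̂₀δ^{2ʰ}Ψ for h ≤ k−1, increments J_h = G_h − G_{h−1}, and approximations
with |G̃₀ − G₀| ≤ εG₀ and |J̃_h − J_h| ≤ n·2ʰ·ε·J_h, the sum G̃_k = G̃₀ + Σ J̃_h
satisfies |G̃_k − G_k| ≤ (1 + 4K̂₀n/(1−δ))·ε·Ψ entrywise. -/
theorem stmt13 (r s : ℕ) (n : ℕ) (hn : 1 ≤ n) (k : ℕ)
    (ε K0hat δ : ℝ) (hε : 0 ≤ ε) (hK0 : 0 ≤ K0hat) (hδ0 : 0 ≤ δ) (hδ1 : δ < 1)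
    (Ψ : Matrix (Fin r) (Fin s) ℝ)
    (G : ℕ → Matrix (Fin r) (Fin s) ℝ)
    (hG0 : ∀ h ≤ k, ∀ i j, 0 ≤ G h i j)
    (hΨ0 : ∀ i j, 0 ≤ Ψ i j)
    (hmono : ∀ h, h + 1 ≤ k → ∀ i j, G h i j ≤ G (h + 1) i j)
    (hGΨ : ∀ h ≤ k, ∀ i j, G h i j ≤ Ψ i j)
    (hrate : ∀ h ≤ k - 1, ∀ i j, Ψ i j - G h i j ≤ K0hat * δ ^ (2 ^ h) * Ψ i j)
    (J : ℕ → Matrix (Fin r) (Fin s) ℝ)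
    (hJ : ∀ h, 1 ≤ h → h ≤ k → J h = G h - G (h - 1))
    (G0til : Matrix (Fin r) (Fin s) ℝ)
    (Jtil : ℕ → Matrix (Fin r) (Fin s) ℝ)
    (hG0til : ∀ i j, |G0til i j - G 0 i j| ≤ ε * G 0 i j)
    (hJtil : ∀ h, 1 ≤ h → h ≤ k → ∀ i j,
      |Jtil h i j - J h i j| ≤ (n : ℝ) * 2 ^ h * ε * J h i j)
    (Gktil : Matrix (Fin r) (Fin s) ℝ)
    (hGktil : Gktil = G0til + ∑ h ∈ Finset.Icc 1 k, Jtil h) :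
    ∀ i j, |Gktil i j - G k i j| ≤ (1 + 4 * K0hat * n / (1 - δ)) * ε * Ψ i j := by
  intro i j
  have hd : (0:ℝ) < 1 - δ := by linarith
  have hgeo : ∑ h ∈ Finset.Icc 1 k, (2:ℝ)^h * δ^(2^(h-1)) ≤ 4 / (1 - δ) := by
    cases k with
    | zero => simp; positivity
    | succ k' =>
        calc ∑ h ∈ Finset.Icc 1 (k'+1), (2:ℝ)^h * δ^(2^(h-1))
            ≤ 4 * ∑ m ∈ Finset.Icc 1 (2^k'), δ^m := geomA δ hδ0 hδ1 k'
          _ ≤ 4 * (1/(1-δ)) := by linarith [geomB δ hδ0 hδ1 (2^k')]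
          _ = 4 / (1-δ) := by ring
  have hJle : ∀ h ∈ Finset.Icc 1 k, J h i j ≤ K0hat * δ^(2^(h-1)) * Ψ i j := by
    intro h hm; rw [Finset.mem_Icc] at hm
    rw [hJ h hm.1 hm.2, Matrix.sub_apply]
    have h2 := hGΨ h hm.2 i j
    have h3 := hrate (h-1) (by omega) i j
    linarith
  have htel : ∀ t, t ≤ k → G t i j = G 0 i j + ∑ h ∈ Finset.Icc 1 t, (G h i j - G (h-1) i j) := by
    intro t ht
    induction t with
    | zero => simp
    | succ t ih =>
        rw [Finset.sum_Icc_succ_top (by omega)]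
        have := ih (by omega)
        simp only [Nat.add_sub_cancel]
        linarith
  have hGk : G k i j = G 0 i j + ∑ h ∈ Finset.Icc 1 k, J h i j := by
    rw [htel k le_rfl]
    congr 1
    apply Finset.sum_congr rfl
    intro h hm; rw [Finset.mem_Icc] at hm
    rw [hJ h hm.1 hm.2, Matrix.sub_apply]
  have hdiff : Gktil i j - G k i j
      = (G0til i j - G 0 i j) + ∑ h ∈ Finset.Icc 1 k, (Jtil h i j - J h i j) := by
    rw [hGktil, hGk]
    simp only [Matrix.add_apply, Matrix.sum_apply, Finset.sum_sub_distrib]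
    ring
  calc |Gktil i j - G k i j|
      ≤ |G0til i j - G 0 i j| + ∑ h ∈ Finset.Icc 1 k, |Jtil h i j - J h i j| := by
        rw [hdiff]
        exact (abs_add_le _ _).trans (by
          gcongr
          exact Finset.abs_sum_le_sum_abs _ _)
    _ ≤ ε * G 0 i j + ∑ h ∈ Finset.Icc 1 k, ((n:ℝ) * 2^h * ε * J h i j) := by
        apply add_le_add (hG0til i j)
        apply Finset.sum_le_sum
        intro h hm; rw [Finset.mem_Icc] at hm
        exact hJtil h hm.1 hm.2 i j
    _ ≤ ε * Ψ i j + ∑ h ∈ Finset.Icc 1 k, ((2:ℝ)^h * δ^(2^(h-1)) * (ε * n * K0hat * Ψ i j)) := by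
        apply add_le_add
        · exact mul_le_mul_of_nonneg_left (hGΨ 0 (Nat.zero_le k) i j) hε
        · apply Finset.sum_le_sum
          intro h hm
          have hc : (0:ℝ) ≤ (n:ℝ) * 2^h * ε := by positivity
          calc (n:ℝ) * 2^h * ε * J h i j
              ≤ (n:ℝ) * 2^h * ε * (K0hat * δ^(2^(h-1)) * Ψ i j) :=
                mul_le_mul_of_nonneg_left (hJle h hm) hc
            _ = (2:ℝ)^h * δ^(2^(h-1)) * (ε * n * K0hat * Ψ i j) := by ring
    _ ≤ ε * Ψ i j + (4 / (1 - δ)) * (ε * n * K0hat * Ψ i j) := by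
        rw [← Finset.sum_mul]
        apply add_le_add_right
        apply mul_le_mul_of_nonneg_right hgeo
        have := hΨ0 i j
        positivity
    _ = (1 + 4 * K0hat * n / (1 - δ)) * ε * Ψ i j := by
        field_simp
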